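/- Let n ∈ {3, 4, 5, 6}, and for each prime p let b_p be a nonzero integer with b_p ≡ 0 (mod p). Then there are only finitely many isomorphism classes of filtered λ-ring structures R on ℤ[x]/(xⁿ) with the property that ψ_p^R(x) ≡ b_p x (mod x²) for all primes p. -/

import Mathlib

open Polynomial

noncomputable section

/-- The truncated polynomial ring `ℤ[x]/(xⁿ)`. -/
abbrev TP (n : ℕ) : Type := Polynomial ℤ ⧸ Ideal.span {(X : Polynomial ℤ) ^ n}

/-- The class of `x` in `ℤ[x]/(xⁿ)`. -/
def xx (n : ℕ) : TP n := Ideal.Quotient.mk _ (X : Polynomial ℤ)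

/-- A filtered λ-ring structure on `ℤ[x]/(xⁿ)`, presented (via Wilkerson's theorem) as a
family of Adams operations `ψ p`, indexed by the primes `p`: each `ψ p` is a ring
endomorphism preserving the filtration ideal `(x)`, they pairwise commute, and
`ψ p r ≡ r ^ p (mod p)`. -/
structure AdamsFamily (n : ℕ) : Type where
  ψ : Nat.Primes → (TP n →+* TP n)
  maps_ideal : ∀ (p : Nat.Primes), ∀ a ∈ Ideal.span {xx n}, ψ p a ∈ Ideal.span {xx n}
  comm : ∀ p q : Nat.Primes, (ψ p).comp (ψ q) = (ψ q).comp (ψ p)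
  frob : ∀ (p : Nat.Primes) (a : TP n),
    ψ p a - a ^ (p : ℕ) ∈ Ideal.span {((p : ℕ) : TP n)}

/-- Isomorphism of filtered λ-ring structures on `ℤ[x]/(xⁿ)`: a filtration-preserving ring
automorphism intertwining the Adams operations. -/
def AdamsIso {n : ℕ} (R S : AdamsFamily n) : Prop :=
  ∃ σ : TP n ≃+* TP n,
    (Ideal.span {xx n}).map σ.toRingHom = Ideal.span {xx n} ∧
    ∀ p : Nat.Primes, σ.toRingHom.comp (R.ψ p) = (S.ψ p).comp σ.toRingHom

/-- The prime 2 as an element of `Nat.Primes`. -/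
def P2 : Nat.Primes := ⟨2, Nat.prime_two⟩

/-- The prime 3 as an element of `Nat.Primes`. -/
def P3 : Nat.Primes := ⟨3, Nat.prime_three⟩

set_option maxHeartbeats 1000000

namespace S19
variable {n : ℕ}

def mkh (n : ℕ) : ℤ[X] →+* TP n := AdjoinRoot.mk (X ^ n : ℤ[X])

def rep (a : TP n) : ℤ[X] := AdjoinRoot.modByMonicHom (monic_X_pow (R := ℤ) n) a

lemma mk_rep (a : TP n) : mkh n (rep a) = a := AdjoinRoot.mk_leftInverse (monic_X_pow n) a

lemma rep_mk (f : ℤ[X]) : rep (mkh n f) = f %ₘ X ^ n :=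
  AdjoinRoot.modByMonicHom_mk (monic_X_pow n) f

def coef (k : ℕ) (a : TP n) : ℤ := (rep a).coeff k

lemma rep_sub (a b : TP n) : rep (a - b) = rep a - rep b := map_sub _ _ _
lemma coef_sub (k : ℕ) (a b : TP n) : coef k (a - b) = coef k a - coef k b := by
  simp [coef, rep_sub]
lemma rep_smul (c : ℤ) (a : TP n) : rep (c • a) = c • rep a := map_smul _ _ _
lemma coef_smul (k : ℕ) (c : ℤ) (a : TP n) : coef k (c • a) = c * coef k a := by
  rw [coef, rep_smul, Polynomial.coeff_smul, smul_eq_mul, coef]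
lemma coef_add (k : ℕ) (a b : TP n) : coef k (a + b) = coef k a + coef k b := by
  simp [coef, show rep (a+b) = rep a + rep b from map_add _ _ _]

lemma coef_mk (f : ℤ[X]) {k : ℕ} (hk : k < n) : coef k (mkh n f) = f.coeff k := by
  rw [coef, rep_mk, Polynomial.modByMonic_eq_sub_mul_div _ (X ^ n)]
  have h0 : (X ^ n * (f /ₘ X ^ n) : ℤ[X]).coeff k = 0 := by
    have : (X : ℤ[X]) ^ n ∣ X ^ n * (f /ₘ X ^ n) := dvd_mul_right _ _
    exact (Polynomial.X_pow_dvd_iff.1 this) k hk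
  simp [coeff_sub, h0]

lemma rep_eq_mod (a : TP n) : rep a = rep a %ₘ X ^ n := by
  conv_lhs => rw [← mk_rep a, rep_mk]

lemma coef_high {k : ℕ} (hk : n ≤ k) (a : TP n) : coef k a = 0 := by
  show (rep a).coeff k = 0
  apply Polynomial.coeff_eq_zero_of_degree_lt
  calc (rep a).degree = (rep a %ₘ X ^ n).degree := by rw [← rep_eq_mod]
    _ < (X ^ n : ℤ[X]).degree := Polynomial.degree_modByMonic_lt _ (monic_X_pow n)
    _ ≤ (k : ℕ) := by rw [degree_X_pow]; exact_mod_cast Nat.cast_le.2 hk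

lemma xx_pow_eq_zero : (xx n) ^ n = 0 := by
  rw [show xx n = mkh n X from rfl, ← map_pow]
  exact Ideal.Quotient.eq_zero_iff_mem.2 (Ideal.subset_span rfl)


lemma mkh_surj (a : TP n) : ∃ f, a = mkh n f := ⟨rep a, (mk_rep a).symm⟩

lemma coef_eq_zero_of_dvd {k : ℕ} {a : TP n} (h : (xx n) ^ k ∣ a) {j : ℕ} (hj : j < k)
    (hjn : j < n) : coef j a = 0 := by
  obtain ⟨t, rfl⟩ := h
  obtain ⟨T, rfl⟩ := mkh_surj t
  have he : (xx n) ^ k * mkh n T = mkh n (X ^ k * T) := by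
    rw [map_mul, map_pow]; rfl
  rw [he, coef_mk _ hjn]
  exact Polynomial.X_pow_dvd_iff.1 (dvd_mul_right _ _) j hj

lemma dvd_of_coef_eq_zero {k : ℕ} {a : TP n} (h : ∀ j < k, coef j a = 0) : (xx n) ^ k ∣ a := by
  obtain ⟨T, hT⟩ := Polynomial.X_pow_dvd_iff.2 h
  refine ⟨mkh n T, ?_⟩
  rw [← mk_rep a, hT, map_mul, map_pow]; rfl

lemma eq_zero_of_xn_dvd {a : TP n} (h : (xx n)^n ∣ a) : a = 0 := by
  rw [xx_pow_eq_zero] at h; exact zero_dvd_iff.1 h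

lemma coef_xx_pow (j : ℕ) {k : ℕ} (hk : k < n) :
    coef j ((xx n)^k) = if j = k then 1 else 0 := by
  rcases lt_or_ge j n with hj | hj
  · rw [show (xx n)^k = mkh n (X^k) by rw [map_pow]; rfl, coef_mk _ hj,
      Polynomial.coeff_X_pow]
  · rw [coef_high hj]
    have hne : j ≠ k := by omega
    simp [hne]

lemma hom_apply (φ : TP n →+* TP n) (a : TP n) : φ a = aeval (φ (xx n)) (rep a) := by
  conv_lhs => rw [← mk_rep a]
  rw [show mkh n (rep a) = aeval (xx n) (rep a) from (AdjoinRoot.aeval_eq _).symm]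
  exact (Polynomial.aeval_algHom_apply φ.toIntAlgHom (xx n) (rep a)).symm

lemma hom_ext {φ ψ : TP n →+* TP n} (h : φ (xx n) = ψ (xx n)) : φ = ψ :=
  RingHom.ext fun a => by rw [hom_apply φ a, hom_apply ψ a, h]

lemma hom_dvd_pow (φ : TP n →+* TP n) (hx : xx n ∣ φ (xx n)) {k : ℕ} {a : TP n}
    (h : (xx n)^k ∣ a) : (xx n)^k ∣ φ a := by
  obtain ⟨t, rfl⟩ := h
  rw [map_mul, map_pow]
  exact dvd_mul_of_dvd_left (pow_dvd_pow_of_dvd hx k) _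

lemma hom_sub_hom_dvd (φ ψ : TP n →+* TP n) (a : TP n) :
    (φ (xx n) - ψ (xx n)) ∣ (φ a - ψ a) := by
  rw [hom_apply φ a, hom_apply ψ a, aeval_def, aeval_def,
    Polynomial.eval₂_eq_eval_map, Polynomial.eval₂_eq_eval_map]
  exact Polynomial.sub_dvd_eval_sub _ _ _

lemma pow_sub_pow_dvd {a b : TP n} (ha : xx n ∣ a) (hb : xx n ∣ b)
    (h : (xx n)^2 ∣ a - b) : ∀ k, (xx n)^(k+1) ∣ a^k - b^k := by
  intro k
  induction k with
  | zero => simp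
  | succ k ih =>
    have key : a^(k+1) - b^(k+1) = a * (a^k - b^k) + (a - b) * b^k := by ring
    rw [key]
    refine dvd_add ?_ ?_
    · calc (xx n)^(k+1+1) = xx n * (xx n)^(k+1) := by ring
        _ ∣ a * (a^k - b^k) := mul_dvd_mul ha ih
    · calc (xx n)^(k+1+1) = (xx n)^2 * (xx n)^k := by ring
        _ ∣ (a-b) * b^k := mul_dvd_mul h (pow_dvd_pow_of_dvd hb k)


lemma dvd_pow_n_zero {t : TP n} (ht : xx n ∣ t) : t ^ n = 0 := by
  obtain ⟨u, rfl⟩ := ht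
  rw [mul_pow, xx_pow_eq_zero, zero_mul]

def phi (t : TP n) (ht : xx n ∣ t) : TP n →+* TP n :=
  AdjoinRoot.lift (Int.castRingHom (TP n)) t (by
    rw [Polynomial.eval₂_X_pow]
    exact dvd_pow_n_zero ht)

lemma phi_x (t : TP n) (ht : xx n ∣ t) : phi t ht (xx n) = t := AdjoinRoot.lift_root _

instance : Module.Finite ℤ (TP n) :=
  Module.Finite.of_basis (AdjoinRoot.powerBasis' (monic_X_pow n)).basis

instance : IsNoetherian ℤ (TP n) := isNoetherian_of_isNoetherianRing_of_finite ℤ (TP n)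

lemma phi_surj_of_root {φ : TP n →+* TP n} {s : TP n} (hs : φ s = xx n) :
    Function.Surjective φ := by
  intro a
  refine ⟨aeval s (rep a), ?_⟩
  calc φ (aeval s (rep a)) = aeval (φ s) (rep a) :=
        (Polynomial.aeval_algHom_apply φ.toIntAlgHom s (rep a)).symm
    _ = aeval (xx n) (rep a) := by rw [hs]
    _ = a := by rw [show aeval (xx n) (rep a) = mkh n (rep a) from AdjoinRoot.aeval_eq _]
                exact mk_rep a

lemma hom_inj_of_surj (φ : TP n →+* TP n) (h : Function.Surjective φ) :
    Function.Injective φ :=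
  IsNoetherian.injective_of_surjective_endomorphism φ.toIntAlgHom.toLinearMap h

lemma phi_inverse {t : TP n} (ht : xx n ∣ t) (h2 : (xx n)^2 ∣ t - xx n) (hn : 2 ≤ n) :
    ∃ s : TP n, (xx n)^2 ∣ s - xx n ∧ phi t ht s = xx n := by
  have key : ∀ k, 2 ≤ k → ∃ s : TP n, (xx n)^2 ∣ s - xx n ∧
      (xx n)^k ∣ (phi t ht s - xx n) := by
    intro k hk
    induction k, hk using Nat.le_induction with
    | base => exact ⟨xx n, by simp, by rw [phi_x]; exact h2⟩
    | succ k hk ih =>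
      obtain ⟨s, hs2, hsk⟩ := ih
      rcases le_or_gt n k with hnk | hkn
      · refine ⟨s, hs2, ?_⟩
        have : phi t ht s - xx n = 0 :=
          eq_zero_of_xn_dvd (dvd_trans (pow_dvd_pow (xx n) hnk) hsk)
        rw [this]; exact dvd_zero _
      · set e := phi t ht s - xx n with he
        set d := coef k e with hd
        refine ⟨s - d • (xx n)^k, ?_, ?_⟩
        · have h1 : (xx n)^2 ∣ d • (xx n)^k := by
            rw [zsmul_eq_mul]
            exact Dvd.dvd.mul_left (pow_dvd_pow (xx n) hk) _
          have : s - d • (xx n)^k - xx n = (s - xx n) - d • (xx n)^k := by ring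
          rw [this]; exact dvd_sub hs2 h1
        · have hmap : phi t ht (s - d • (xx n)^k) - xx n
              = (e - d • (xx n)^k) - d • (t^k - (xx n)^k) := by
            simp only [map_sub, map_zsmul, map_mul, map_intCast, map_pow, phi_x, he, zsmul_eq_mul]; ring
          rw [hmap]
          refine dvd_sub ?_ ?_
          · apply dvd_of_coef_eq_zero
            intro j hj
            rcases lt_or_eq_of_le (Nat.lt_succ_iff.1 hj) with hjk | hjk
            · rw [coef_sub, coef_smul, coef_eq_zero_of_dvd hsk hjk (hjk.trans hkn),
                coef_xx_pow j hkn, if_neg (Nat.ne_of_lt hjk)]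
              ring
            · subst hjk
              rw [coef_sub, coef_smul, coef_xx_pow j hkn, if_pos rfl, ← hd]
              ring
          · rw [zsmul_eq_mul]
            exact Dvd.dvd.mul_left (pow_sub_pow_dvd ht dvd_rfl h2 k) _
  obtain ⟨s, hs2, hsn⟩ := key n hn
  exact ⟨s, hs2, by rw [← sub_eq_zero]; exact eq_zero_of_xn_dvd hsn⟩

lemma exists_sigma {t : TP n} (ht : xx n ∣ t) (h2 : (xx n)^2 ∣ t - xx n) (hn : 2 ≤ n) :
    ∃ σ : TP n ≃+* TP n, σ (xx n) = t ∧ (xx n)^2 ∣ σ.symm (xx n) - xx n := by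
  obtain ⟨s, hs2, hs⟩ := phi_inverse ht h2 hn
  have hsurj : Function.Surjective (phi t ht) := phi_surj_of_root hs
  have hinj := hom_inj_of_surj _ hsurj
  refine ⟨RingEquiv.ofBijective (phi t ht) ⟨hinj, hsurj⟩, phi_x t ht, ?_⟩
  have hss : (RingEquiv.ofBijective (phi t ht) ⟨hinj, hsurj⟩).symm (xx n) = s := by
    apply hinj
    rw [hs]
    exact (RingEquiv.ofBijective (phi t ht) ⟨hinj, hsurj⟩).apply_symm_apply (xx n)
  rw [hss]; exact hs2


lemma dvd_of_maps_ideal {R : AdamsFamily n} (p : Nat.Primes) {a : TP n} (h : xx n ∣ a) :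
    xx n ∣ R.ψ p a :=
  Ideal.mem_span_singleton.1 (R.maps_ideal p a (Ideal.mem_span_singleton.2 h))

lemma comm_apply (R : AdamsFamily n) (p q : Nat.Primes) (a : TP n) :
    R.ψ p (R.ψ q a) = R.ψ q (R.ψ p a) := RingHom.congr_fun (R.comm p q) a

lemma beta_pow_ne {β : ℤ} (hβ : 2 ≤ |β|) {k : ℕ} (hk : 2 ≤ k) : β ^ k ≠ β := by
  have h1 : (1 : ℤ) < |β| := by omega
  have : |β| < |β ^ k| := by
    rw [abs_pow]
    calc |β| = |β| ^ 1 := (pow_one _).symm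
      _ < |β| ^ k := by
          apply pow_lt_pow_right₀ h1
          omega
  intro hc
  rw [hc] at this
  exact lt_irrefl _ this


lemma coef_intmul (k : ℕ) (c : ℤ) (a : TP n) : coef k ((c : TP n) * a) = c * coef k a := by
  rw [← zsmul_eq_mul]; exact coef_smul k c a

lemma rigid_step (hn : 2 ≤ n) {β : ℤ} (hβ : 2 ≤ |β|) (Φ ψR ψS : TP n →+* TP n)
    (hcommR : Φ (ψR (xx n)) = ψR (Φ (xx n))) (hcommS : Φ (ψS (xx n)) = ψS (Φ (xx n)))
    (hxf : xx n ∣ ψR (xx n)) (hxg : xx n ∣ ψS (xx n)) (hxh : xx n ∣ Φ (xx n))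
    (hv : (xx n)^2 ∣ Φ (xx n) - (β : TP n) * xx n)
    (hfg2 : (xx n)^2 ∣ ψR (xx n) - ψS (xx n)) : ψR = ψS := by
  apply hom_ext
  have key : ∀ k, 2 ≤ k → (xx n)^k ∣ ψR (xx n) - ψS (xx n) := by
    intro k hk
    induction k, hk using Nat.le_induction with
    | base => exact hfg2
    | succ k hk ih =>
      rcases le_or_gt n k with hnk | hkn
      · rw [eq_zero_of_xn_dvd ((pow_dvd_pow _ hnk).trans ih)]; exact dvd_zero _
      set x := xx n with hxdef
      set f := ψR x with hfdef
      set g := ψS x with hgdef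
      set h := Φ x with hhdef
      set d := coef k (f - g) with hd
      have hwdvd : x^(k+1) ∣ f - g - (d : TP n) * x^k := by
        apply dvd_of_coef_eq_zero
        intro j hj
        rcases lt_or_eq_of_le (Nat.lt_succ_iff.1 hj) with hjk | hjk
        · rw [coef_sub, coef_intmul, coef_eq_zero_of_dvd ih hjk (hjk.trans hkn),
            coef_xx_pow j hkn, if_neg (Nat.ne_of_lt hjk)]; ring
        · subst hjk
          rw [coef_sub, coef_intmul, coef_xx_pow j hkn, if_pos rfl, ← hd]; ring
      have hhk : x^(k+1) ∣ h^k - ((β:TP n) * x)^k :=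
        pow_sub_pow_dvd hxh (dvd_mul_left _ _) hv k
      have hΦw : x^(k+1) ∣ Φ (f - g - (d:TP n) * x^k) := hom_dvd_pow Φ hxh hwdvd
      have hsplit : Φ (f - g - (d:TP n) * x^k) = Φ f - Φ g - (d:TP n) * h^k := by
        simp only [map_sub, map_mul, map_intCast, map_pow]
        rfl
      have hE1 : x^(k+1) ∣ Φ f - Φ g - (d:TP n) * (β:TP n)^k * x^k := by
        have hid : Φ f - Φ g - (d:TP n) * (β:TP n)^k * x^k
            = Φ (f - g - (d:TP n) * x^k) + (d:TP n) * (h^k - ((β:TP n) * x)^k) := by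
          rw [hsplit]; ring
        rw [hid]
        exact dvd_add hΦw (Dvd.dvd.mul_left hhk _)
      have hE3 : x^(k+1) ∣ ψR h - ψS h - (β:TP n) * (f - g) := by
        obtain ⟨q, hq⟩ := hv
        have hhv : h = (β:TP n) * x + x^2 * q := by rw [← hq]; ring
        have hR : ψR h = (β:TP n) * f + f^2 * ψR q := by
          rw [hhv]
          simp only [map_add, map_mul, map_intCast, map_pow]
          rfl
        have hS : ψS h = (β:TP n) * g + g^2 * ψS q := by
          rw [hhv]
          simp only [map_add, map_mul, map_intCast, map_pow]
          rfl
        have hid : ψR h - ψS h - (β:TP n) * (f - g)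
            = f^2 * (ψR q - ψS q) + (f - g) * ((f + g) * ψS q) := by
          rw [hR, hS]; ring
        rw [hid]
        refine dvd_add ((pow_dvd_pow x (by omega : k+1 ≤ k+2)).trans ?_) ?_
        · calc x^(k+2) = x^2 * x^k := by ring
            _ ∣ f^2 * (ψR q - ψS q) :=
              mul_dvd_mul (pow_dvd_pow_of_dvd hxf 2)
                (ih.trans (hom_sub_hom_dvd ψR ψS q))
        · calc x^(k+1) = x^k * x := by ring
            _ ∣ (f - g) * ((f + g) * ψS q) :=
              mul_dvd_mul ih (Dvd.dvd.mul_right (dvd_add hxf hxg) _)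
      have hcomb : x^(k+1) ∣ ((d * β^k - β * d : ℤ) : TP n) * x^k := by
        have hβw : x^(k+1) ∣ (β:TP n) * (f - g - (d:TP n) * x^k) :=
          Dvd.dvd.mul_left hwdvd _
        have hE2 : Φ f - Φ g = ψR h - ψS h := by rw [hcommR, hcommS]
        have hid : ((d * β^k - β * d : ℤ) : TP n) * x^k
            = (ψR h - ψS h - (β:TP n) * (f - g))
              - (Φ f - Φ g - (d:TP n) * (β:TP n)^k * x^k)
              + (β:TP n) * (f - g - (d:TP n) * x^k) := by
          rw [← hE2]; push_cast; ring
        rw [hid]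
        exact dvd_add (dvd_sub hE3 hE1) hβw
      have hd0 : d * β^k - β * d = 0 := by
        have hco := coef_eq_zero_of_dvd hcomb (Nat.lt_succ_self k) hkn
        rwa [coef_intmul, coef_xx_pow k hkn, if_pos rfl, mul_one] at hco
      have hdz : d = 0 := by
        have hne : β^k - β ≠ 0 := sub_ne_zero.2 (beta_pow_ne hβ hk)
        have hmul : d * (β^k - β) = 0 := by rw [mul_sub, mul_comm d β]; exact hd0
        rcases mul_eq_zero.1 hmul with hcase | hcase
        · exact hcase
        · exact absurd hcase hne
      have hfw : f - g = f - g - (d:TP n) * x^k := by rw [hdz]; push_cast; ring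
      rw [hfw]; exact hwdvd
  have hfg : ψR (xx n) - ψS (xx n) = 0 := eq_zero_of_xn_dvd (key n hn)
  linear_combination hfg

lemma rigidity (hn : 2 ≤ n) (R S : AdamsFamily n) {β : ℤ} (hβ : 2 ≤ |β|)
    (h2 : R.ψ P2 = S.ψ P2)
    (hβx : (xx n)^2 ∣ R.ψ P2 (xx n) - (β : TP n) * xx n)
    (hp : ∀ p, (xx n)^2 ∣ R.ψ p (xx n) - S.ψ p (xx n)) :
    ∀ p, R.ψ p = S.ψ p := by
  intro p
  apply rigid_step hn hβ (R.ψ P2) (R.ψ p) (S.ψ p)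
  · exact comm_apply R P2 p (xx n)
  · rw [h2]; exact comm_apply S P2 p (xx n)
  · exact dvd_of_maps_ideal p dvd_rfl
  · exact dvd_of_maps_ideal p dvd_rfl
  · exact dvd_of_maps_ideal P2 dvd_rfl
  · exact hβx
  · exact hp p


lemma hom_dvd (φ : TP n →+* TP n) (hx : xx n ∣ φ (xx n)) {a : TP n} (h : xx n ∣ a) :
    xx n ∣ φ a := by
  have h1 : (xx n)^1 ∣ a := by simpa using h
  simpa using hom_dvd_pow φ hx h1

lemma equiv_dvd (e : TP n ≃+* TP n) (he : xx n ∣ e (xx n)) {a : TP n} (h : xx n ∣ a) :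
    xx n ∣ e a := by
  obtain ⟨u, rfl⟩ := h
  rw [map_mul]
  exact dvd_mul_of_dvd_left he _

def conjF (R : AdamsFamily n) (σ : TP n ≃+* TP n) (hσ : xx n ∣ σ (xx n))
    (hσs : xx n ∣ σ.symm (xx n)) : AdamsFamily n where
  ψ p := (σ : TP n →+* TP n).comp ((R.ψ p).comp (σ.symm : TP n →+* TP n))
  maps_ideal p a ha := by
    rw [Ideal.mem_span_singleton] at ha ⊢
    simp only [RingHom.comp_apply, RingEquiv.toRingHom_eq_coe, RingHom.coe_coe]
    exact equiv_dvd σ hσ (dvd_of_maps_ideal p (equiv_dvd σ.symm hσs ha))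
  comm p q := by
    apply RingHom.ext; intro a
    simp only [RingHom.comp_apply, RingEquiv.toRingHom_eq_coe, RingHom.coe_coe,
      RingEquiv.symm_apply_apply]
    rw [comm_apply]
  frob p a := by
    rw [Ideal.mem_span_singleton]
    obtain ⟨u, hu⟩ := Ideal.mem_span_singleton.1 (R.frob p (σ.symm a))
    simp only [RingHom.comp_apply, RingEquiv.toRingHom_eq_coe, RingHom.coe_coe]
    have ha : a ^ (p:ℕ) = σ ((σ.symm a) ^ (p:ℕ)) := by
      rw [map_pow, RingEquiv.apply_symm_apply]
    rw [ha, ← map_sub, hu, map_mul, map_natCast]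
    exact dvd_mul_right _ _

lemma conjF_apply (R : AdamsFamily n) (σ : TP n ≃+* TP n) (hσ : xx n ∣ σ (xx n))
    (hσs : xx n ∣ σ.symm (xx n)) (p : Nat.Primes) (a : TP n) :
    (conjF R σ hσ hσs).ψ p a = σ (R.ψ p (σ.symm a)) := rfl

lemma conjF_iso (R : AdamsFamily n) (σ : TP n ≃+* TP n) (hσ : xx n ∣ σ (xx n))
    (hσs : xx n ∣ σ.symm (xx n)) (h2 : (xx n)^2 ∣ σ (xx n) - xx n) :
    AdamsIso R (conjF R σ hσ hσs) := by
  refine ⟨σ, ?_, ?_⟩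
  · rw [Ideal.map_span, Set.image_singleton]
    obtain ⟨q, hq⟩ := h2
    have hq' : σ (xx n) = xx n * (1 + xx n * q) := by linear_combination hq
    have hnil : IsNilpotent (xx n * q) := ⟨n, by rw [mul_pow, xx_pow_eq_zero, zero_mul]⟩
    obtain ⟨w, hw⟩ := hnil.isUnit_one_add
    apply le_antisymm
    · rw [Ideal.span_singleton_le_span_singleton]
      show xx n ∣ σ (xx n)
      exact hσ
    · rw [Ideal.span_singleton_le_span_singleton]
      show σ (xx n) ∣ xx n
      refine ⟨↑w⁻¹, ?_⟩
      rw [hq', ← hw, mul_assoc, Units.mul_inv, mul_one]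
  · intro p
    apply RingHom.ext; intro a
    simp only [RingHom.comp_apply, RingEquiv.toRingHom_eq_coe, RingHom.coe_coe,
      conjF_apply, RingEquiv.symm_apply_apply]

lemma conjF_lin (R : AdamsFamily n) (σ : TP n ≃+* TP n) (hσ : xx n ∣ σ (xx n))
    (hσs : xx n ∣ σ.symm (xx n)) (hσ2 : (xx n)^2 ∣ σ (xx n) - xx n)
    (hσs2 : (xx n)^2 ∣ σ.symm (xx n) - xx n)
    {p : Nat.Primes} {c : ℤ} (hc : (xx n)^2 ∣ R.ψ p (xx n) - (c : TP n) * xx n) :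
    (xx n)^2 ∣ (conjF R σ hσ hσs).ψ p (xx n) - (c : TP n) * xx n := by
  rw [conjF_apply]
  have step1 : (xx n)^2 ∣ R.ψ p (σ.symm (xx n)) - (c : TP n) * xx n := by
    have hd : (xx n)^2 ∣ R.ψ p (σ.symm (xx n) - xx n) :=
      hom_dvd_pow (R.ψ p) (dvd_of_maps_ideal p dvd_rfl) hσs2
    have hid : R.ψ p (σ.symm (xx n)) - (c : TP n) * xx n
        = R.ψ p (σ.symm (xx n) - xx n) + (R.ψ p (xx n) - (c : TP n) * xx n) := by
      rw [map_sub]; ring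
    rw [hid]
    exact dvd_add hd hc
  obtain ⟨u, hu⟩ := step1
  have hσu : R.ψ p (σ.symm (xx n)) = (c : TP n) * xx n + (xx n)^2 * u := by
    linear_combination hu
  rw [hσu]
  simp only [map_add, map_mul, map_intCast, map_pow]
  have hid2 : (c : TP n) * σ (xx n) + (σ (xx n))^2 * σ u - (c : TP n) * xx n
      = (c : TP n) * (σ (xx n) - xx n) + (σ (xx n))^2 * σ u := by ring
  rw [hid2]
  exact dvd_add (Dvd.dvd.mul_left hσ2 _)
    (Dvd.dvd.mul_right (pow_dvd_pow_of_dvd hσ 2) _)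


lemma equiv_dvd_pow (e : TP n ≃+* TP n) (he : xx n ∣ e (xx n)) {k : ℕ} {a : TP n}
    (h : (xx n)^k ∣ a) : (xx n)^k ∣ e a := by
  obtain ⟨u, rfl⟩ := h
  rw [map_mul, map_pow]
  exact dvd_mul_of_dvd_left (pow_dvd_pow_of_dvd he k) _

lemma conj_coef (hn : 2 ≤ n) (R : AdamsFamily n) {β : ℤ}
    (hβx : (xx n)^2 ∣ R.ψ P2 (xx n) - (β:TP n) * xx n)
    {K : ℕ} (hK : 2 ≤ K) (hKn : K < n) (a : ℤ) :
    ∃ S : AdamsFamily n, AdamsIso R S ∧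
      (∀ p : Nat.Primes, ∀ c : ℤ, (xx n)^2 ∣ R.ψ p (xx n) - (c:TP n) * xx n →
        (xx n)^2 ∣ S.ψ p (xx n) - (c:TP n) * xx n) ∧
      (∀ j, j < K → coef j (S.ψ P2 (xx n)) = coef j (R.ψ P2 (xx n))) ∧
      coef K (S.ψ P2 (xx n)) = coef K (R.ψ P2 (xx n)) + a * (β - β^K) := by
  set x := xx n with hxdef
  set t := x + (a:TP n) * x^K with htdef
  have htx : t - x = (a:TP n) * x^K := by rw [htdef]; ring
  have hxK : x ∣ x^K := dvd_pow_self x (by omega)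
  have ht : x ∣ t := by
    rw [htdef]
    exact dvd_add dvd_rfl (Dvd.dvd.mul_left hxK _)
  have h2 : x^2 ∣ t - x := by
    rw [htx]
    exact Dvd.dvd.mul_left (pow_dvd_pow x hK) _
  obtain ⟨σ, hσx, hσs2⟩ := exists_sigma ht h2 hn
  rw [← hxdef] at hσx hσs2
  have hσ2 : x^2 ∣ σ x - x := by rw [hσx]; exact h2
  have hσd : x ∣ σ x := by rw [hσx]; exact ht
  have hσsd : x ∣ σ.symm x := by
    have hxx2 : x ∣ x^2 := dvd_pow_self x (by omega)
    have h2' : x ∣ σ.symm x - x := hxx2.trans hσs2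
    have hid : σ.symm x = (σ.symm x - x) + x := by ring
    rw [hid]
    exact dvd_add h2' dvd_rfl
  have hψ2x : x ∣ R.ψ P2 x := dvd_of_maps_ideal P2 dvd_rfl
  set h := R.ψ P2 x with hhdef
  -- step 1
  have htK : x^(K+1) ∣ t^K - x^K := pow_sub_pow_dvd ht dvd_rfl h2 K
  have hs1 : x^(K+1) ∣ σ.symm x - (x - (a:TP n) * x^K) := by
    have he : σ (x - (a:TP n) * x^K) - x = -((a:TP n) * (t^K - x^K)) := by
      simp only [map_sub, map_mul, map_intCast, map_pow, hσx]
      ring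
    have hee : x^(K+1) ∣ σ (x - (a:TP n) * x^K) - x := by
      rw [he]
      exact dvd_neg.2 (Dvd.dvd.mul_left htK _)
    have hid : σ.symm x - (x - (a:TP n) * x^K)
        = -(σ.symm (σ (x - (a:TP n) * x^K) - x)) := by
      rw [map_sub, RingEquiv.symm_apply_apply]
      ring
    rw [hid]
    exact dvd_neg.2 (equiv_dvd_pow σ.symm hσsd hee)
  -- step 2
  have hhK : x^(K+1) ∣ h^K - ((β:TP n) * x)^K :=
    pow_sub_pow_dvd hψ2x (dvd_mul_left _ _) hβx K
  have hDs : x^(K+1) ∣ R.ψ P2 (σ.symm x) - (h - (a:TP n) * ((β:TP n) * x)^K) := by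
    have hsplit : R.ψ P2 (σ.symm x) - (h - (a:TP n) * ((β:TP n) * x)^K)
        = R.ψ P2 (σ.symm x - (x - (a:TP n) * x^K))
          - (a:TP n) * (h^K - ((β:TP n) * x)^K) := by
      simp only [map_sub, map_mul, map_intCast, map_pow]
      ring
    rw [hsplit]
    exact dvd_sub (hom_dvd_pow _ hψ2x hs1) (Dvd.dvd.mul_left hhK _)
  -- step 3
  have hs3 : x^(K+1) ∣ σ (R.ψ P2 (σ.symm x))
      - (σ h - (a:TP n) * ((β:TP n))^K * x^K) := by
    have hd1 : x^(K+1) ∣ σ (R.ψ P2 (σ.symm x) - (h - (a:TP n) * ((β:TP n) * x)^K)) :=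
      equiv_dvd_pow σ hσd hDs
    have hxtK : x^(K+1) ∣ x^K - t^K := by
      rw [← neg_sub (t^K) (x^K)]
      exact dvd_neg.2 htK
    have hexp : σ (R.ψ P2 (σ.symm x) - (h - (a:TP n) * ((β:TP n) * x)^K))
        = σ (R.ψ P2 (σ.symm x)) - σ h + (a:TP n) * ((β:TP n))^K * t^K := by
      simp only [map_sub, map_mul, map_intCast, map_pow, hσx, mul_pow]
      ring
    have hid : σ (R.ψ P2 (σ.symm x)) - (σ h - (a:TP n) * ((β:TP n))^K * x^K)
        = σ (R.ψ P2 (σ.symm x) - (h - (a:TP n) * ((β:TP n) * x)^K))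
          + (a:TP n) * ((β:TP n))^K * (x^K - t^K) := by
      rw [hexp]
      ring
    rw [hid]
    exact dvd_add hd1 (Dvd.dvd.mul_left hxtK _)
  -- step 4
  have hs4 : x^(K+1) ∣ σ h - h - (a:TP n) * (β:TP n) * x^K := by
    obtain ⟨q, hq⟩ := hβx
    have hσq : x^K ∣ σ q - q := by
      have hdvd := hom_sub_hom_dvd (σ : TP n →+* TP n) (RingHom.id (TP n)) q
      have hx' : (σ : TP n →+* TP n) x - (RingHom.id (TP n)) x = (a:TP n) * x^K := by
        simp only [RingHom.coe_coe, RingHom.id_apply]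
        rw [hσx, htx]
      rw [hx'] at hdvd
      have : (σ : TP n →+* TP n) q - (RingHom.id (TP n)) q = σ q - q := rfl
      rw [this] at hdvd
      exact (Dvd.dvd.mul_left dvd_rfl (a:TP n)).trans hdvd
    have hhe : h = (β:TP n) * x + x^2 * q := by linear_combination hq
    have hσh : σ h = (β:TP n) * σ x + (σ x)^2 * σ q := by
      rw [hhe]
      simp only [map_add, map_mul, map_intCast, map_pow]
    have hσxe : σ x = x + (a:TP n) * x^K := by rw [hσx]
    have hid : σ h - h - (a:TP n) * (β:TP n) * x^K
        = (σ x)^2 * (σ q - q) + ((a:TP n) * x^K) * ((σ x + x) * q) := by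
      rw [hσh, hσxe]
      nth_rewrite 1 [hhe]
      ring
    rw [hid]
    refine dvd_add ((pow_dvd_pow x (by omega : K+1 ≤ K+2)).trans ?_) ?_
    · calc x^(K+2) = x^2 * x^K := by ring
        _ ∣ (σ x)^2 * (σ q - q) := mul_dvd_mul (pow_dvd_pow_of_dvd hσd 2) hσq
    · calc x^(K+1) = x^K * x := by ring
        _ ∣ ((a:TP n) * x^K) * ((σ x + x) * q) :=
          mul_dvd_mul (dvd_mul_left _ _)
            (Dvd.dvd.mul_right (dvd_add hσd dvd_rfl) _)
  -- final
  have hfinal : x^(K+1) ∣ (conjF R σ hσd hσsd).ψ P2 x - h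
      - ((a * (β - β^K) : ℤ) : TP n) * x^K := by
    have hid : (conjF R σ hσd hσsd).ψ P2 x - h - ((a * (β - β^K) : ℤ) : TP n) * x^K
        = (σ (R.ψ P2 (σ.symm x)) - (σ h - (a:TP n) * ((β:TP n))^K * x^K))
          + (σ h - h - (a:TP n) * (β:TP n) * x^K) := by
      rw [conjF_apply]
      push_cast
      ring
    rw [hid]
    exact dvd_add hs3 hs4
  refine ⟨conjF R σ hσd hσsd, conjF_iso R σ hσd hσsd hσ2, ?_, ?_, ?_⟩
  · intro p c hc
    exact conjF_lin R σ hσd hσsd hσ2 hσs2 hc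
  · intro j hj
    have hco := coef_eq_zero_of_dvd (j := j) hfinal (by omega) (by omega)
    rw [coef_sub, coef_sub, coef_intmul, coef_xx_pow j hKn,
      if_neg (Nat.ne_of_lt hj)] at hco
    linarith [hco]
  · have hco := coef_eq_zero_of_dvd hfinal (Nat.lt_succ_self K) hKn
    rw [coef_sub, coef_sub, coef_intmul, coef_xx_pow K hKn, if_pos rfl] at hco
    linarith [hco]


lemma adamsIso_refl (R : AdamsFamily n) : AdamsIso R R := by
  refine ⟨RingEquiv.refl _, ?_, fun p => ?_⟩
  · have h : (RingEquiv.refl (TP n)).toRingHom = RingHom.id _ := rfl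
    rw [h, Ideal.map_id]
  · have h : (RingEquiv.refl (TP n)).toRingHom = RingHom.id _ := rfl
    rw [h, RingHom.id_comp, RingHom.comp_id]

lemma adamsIso_trans {R S T : AdamsFamily n} (h1 : AdamsIso R S) (h2 : AdamsIso S T) :
    AdamsIso R T := by
  obtain ⟨σ, hσI, hσC⟩ := h1
  obtain ⟨τ, hτI, hτC⟩ := h2
  refine ⟨σ.trans τ, ?_, ?_⟩
  · have h : (σ.trans τ).toRingHom = τ.toRingHom.comp σ.toRingHom := rfl
    rw [h, ← Ideal.map_map, hσI, hτI]
  · intro p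
    have h : (σ.trans τ).toRingHom = τ.toRingHom.comp σ.toRingHom := rfl
    rw [h, RingHom.comp_assoc, hσC p, ← RingHom.comp_assoc, hτC p, RingHom.comp_assoc]

lemma adamsFamily_ext {R S : AdamsFamily n} (h : ∀ p, R.ψ p = S.ψ p) : R = S := by
  cases R; cases S
  simp only [AdamsFamily.mk.injEq]
  exact funext h

lemma normalize (hn : 2 ≤ n) {β : ℤ} (hβ : 2 ≤ |β|)
    (b : Nat.Primes → ℤ) (hβb : β = b P2) (R : AdamsFamily n)
    (hcond : ∀ p, (xx n)^2 ∣ R.ψ p (xx n) - (b p : TP n) * xx n) :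
    ∀ K, ∃ S : AdamsFamily n, AdamsIso R S ∧
      (∀ p, (xx n)^2 ∣ S.ψ p (xx n) - (b p : TP n) * xx n) ∧
      (∀ j, 2 ≤ j → j < K →
        0 ≤ coef j (S.ψ P2 (xx n)) ∧ coef j (S.ψ P2 (xx n)) < |β - β^j|) := by
  intro K
  induction K with
  | zero => exact ⟨R, adamsIso_refl R, hcond, fun j _ hj => absurd hj (by omega)⟩
  | succ K ih =>
    obtain ⟨S, hiso, hcondS, hco⟩ := ih
    have hβxS : (xx n)^2 ∣ S.ψ P2 (xx n) - (β : TP n) * xx n := by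
      rw [hβb]; exact hcondS P2
    by_cases hK2 : 2 ≤ K ∧ K < n
    · obtain ⟨hK, hKn⟩ := hK2
      have hne : β - β^K ≠ 0 := sub_ne_zero.2 (Ne.symm (beta_pow_ne hβ hK))
      set c := coef K (S.ψ P2 (xx n)) with hc
      obtain ⟨a, ha⟩ : ∃ a : ℤ, c + a * (β - β^K) = c % |β - β^K| := by
        have hd1 : (β - β^K) ∣ (c - c % |β - β^K|) := by
          have he : c - c % |β - β^K| = |β - β^K| * (c / |β - β^K|) := by
            rw [Int.emod_def]; ring
          rw [he]
          exact Dvd.dvd.mul_right ((dvd_abs _ _).2 dvd_rfl) _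
        obtain ⟨u, hu⟩ := hd1
        exact ⟨-u, by linarith [hu]⟩
      obtain ⟨T, hTiso, hTlin, hTco, hTcoK⟩ := conj_coef hn S hβxS hK hKn a
      refine ⟨T, adamsIso_trans hiso hTiso, fun p => hTlin p (b p) (hcondS p), ?_⟩
      intro j h2j hjK1
      rcases Nat.lt_or_ge j K with hjK | hjK
      · rw [hTco j hjK]
        exact hco j h2j hjK
      · have hjeq : j = K := by omega
        subst hjeq
        rw [hTcoK, ← hc, ha]
        have h0 : |β - β^j| ≠ 0 := abs_ne_zero.2 hne
        exact ⟨Int.emod_nonneg c h0, by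
          have := Int.emod_lt_of_pos c (abs_pos.2 hne)
          simpa using this⟩
    · refine ⟨S, hiso, hcondS, ?_⟩
      intro j h2j hjK1
      rcases Nat.lt_or_ge j K with hjK | hjK
      · exact hco j h2j hjK
      · have hjeq : j = K := by omega
        subst hjeq
        have hjn : n ≤ j := by omega
        have hz : coef j (S.ψ P2 (xx n)) = 0 := coef_high hjn _
        have hne : β - β^j ≠ 0 := sub_ne_zero.2 (Ne.symm (beta_pow_ne hβ h2j))
        rw [hz]
        exact ⟨le_refl 0, abs_pos.2 hne⟩

lemma coef_zero_psi (R : AdamsFamily n) (hn : 1 ≤ n) (p : Nat.Primes) :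
    coef 0 (R.ψ p (xx n)) = 0 := by
  have hd : (xx n)^1 ∣ R.ψ p (xx n) := by
    rw [pow_one]; exact dvd_of_maps_ideal p dvd_rfl
  exact coef_eq_zero_of_dvd hd (by omega) (by omega)

lemma coef_one_psi (R : AdamsFamily n) (hn : 2 ≤ n) (p : Nat.Primes) {c : ℤ}
    (hc : (xx n)^2 ∣ R.ψ p (xx n) - (c : TP n) * xx n) :
    coef 1 (R.ψ p (xx n)) = c := by
  have hco := coef_eq_zero_of_dvd hc (by omega : 1 < 2) (by omega)
  have hxc : coef 1 (xx n) = 1 := by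
    rw [show (xx n) = mkh n X from rfl, coef_mk _ (by omega : 1 < n),
      Polynomial.coeff_X_one]
  rw [coef_sub, coef_intmul, hxc] at hco
  linarith [hco]


lemma ext_coef {a b : TP n} (h : ∀ j, coef j a = coef j b) : a = b := by
  rw [← mk_rep a, ← mk_rep b]
  congr 1
  exact Polynomial.ext h

end S19


theorem stmt19 (n : ℕ) (hn : n = 3 ∨ n = 4 ∨ n = 5 ∨ n = 6) (b : Nat.Primes → ℤ)
    (hb0 : ∀ p : Nat.Primes, b p ≠ 0)
    (hbd : ∀ p : Nat.Primes, ((p : ℕ) : ℤ) ∣ b p) :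
    Finite (Quot (fun (R S : {R : AdamsFamily n //
        ∀ p : Nat.Primes,
          R.ψ p (xx n) - (b p : TP n) * xx n ∈ Ideal.span {xx n ^ 2}}) =>
      AdamsIso R.1 S.1)) := by
  have hn2 : 2 ≤ n := by rcases hn with h|h|h|h <;> omega
  set β : ℤ := b P2 with hβdef
  have hβdvd : (2:ℤ) ∣ β := by
    have h := hbd P2
    have h2 : ((P2 : ℕ) : ℤ) = 2 := by norm_num [P2]
    rwa [h2] at h
  have hβ : 2 ≤ |β| := Int.le_of_dvd (abs_pos.2 (hb0 P2)) ((dvd_abs _ _).2 hβdvd)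
  set Sub := {R : AdamsFamily n // ∀ p : Nat.Primes,
      R.ψ p (xx n) - (b p : TP n) * xx n ∈ Ideal.span {xx n ^ 2}} with hSub
  have hcond : ∀ (R : Sub) (p : Nat.Primes),
      (xx n)^2 ∣ R.1.ψ p (xx n) - (b p : TP n) * xx n :=
    fun R p => Ideal.mem_span_singleton.1 (R.2 p)
  set C := {R : Sub // ∀ j, 2 ≤ j →
      0 ≤ S19.coef j (R.1.ψ P2 (xx n)) ∧ S19.coef j (R.1.ψ P2 (xx n)) < |β - β^j|}
    with hC
  haveI hCfin : Finite C := by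
    set lo : Fin n → ℤ := fun k => if (k:ℕ) = 1 then β else 0 with hlo
    set hi : Fin n → ℤ := fun k => if (k:ℕ) = 1 then β+1 else if (k:ℕ) = 0 then 1
        else |β - β^(k:ℕ)| with hhi
    have hVfin : (Set.univ.pi (fun k : Fin n => Set.Ico (lo k) (hi k))).Finite :=
      Set.Finite.pi (fun k => Set.finite_Ico _ _)
    haveI := hVfin.to_subtype
    have hmem : ∀ c : C, (fun k : Fin n => S19.coef (k:ℕ) (c.1.1.ψ P2 (xx n)))
        ∈ Set.univ.pi (fun k : Fin n => Set.Ico (lo k) (hi k)) := by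
      intro c k _
      simp only [Set.mem_Ico]
      have hjn : (k:ℕ) < n := k.2
      by_cases h0 : (k:ℕ) = 0
      · have hz : S19.coef (k:ℕ) (c.1.1.ψ P2 (xx n)) = 0 := by
          rw [h0]; exact S19.coef_zero_psi _ (by omega) _
        rw [hz, hlo, hhi]
        simp [h0]
      by_cases h1 : (k:ℕ) = 1
      · have hz : S19.coef (k:ℕ) (c.1.1.ψ P2 (xx n)) = β := by
          rw [h1]
          exact S19.coef_one_psi _ hn2 P2 (hcond c.1 P2)
        rw [hz]
        constructor
        · simpa [hlo, h1] using le_refl β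
        · have hb1 : β < β + 1 := by omega
          simpa [hhi, h1] using hb1
      · have h2 : 2 ≤ (k:ℕ) := by omega
        have hb2 := c.2 (k:ℕ) h2
        simp only [hlo, hhi, if_neg h0, if_neg h1]
        exact hb2
    have hinj : Function.Injective (fun c : C =>
        (⟨fun k : Fin n => S19.coef (k:ℕ) (c.1.1.ψ P2 (xx n)), hmem c⟩ :
          ↥(Set.univ.pi (fun k : Fin n => Set.Ico (lo k) (hi k))))) := by
      intro c1 c2 hc
      have hfun := congrArg Subtype.val hc
      simp only at hfun
      have hcoefs : ∀ j, S19.coef j (c1.1.1.ψ P2 (xx n))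
          = S19.coef j (c2.1.1.ψ P2 (xx n)) := by
        intro j
        rcases Nat.lt_or_ge j n with hj | hj
        · exact congrFun hfun ⟨j, hj⟩
        · rw [S19.coef_high hj, S19.coef_high hj]
      have hx2 : c1.1.1.ψ P2 (xx n) = c2.1.1.ψ P2 (xx n) := S19.ext_coef hcoefs
      have hψ2 : c1.1.1.ψ P2 = c2.1.1.ψ P2 := S19.hom_ext hx2
      have hβx : (xx n)^2 ∣ c1.1.1.ψ P2 (xx n) - (β : TP n) * xx n :=
        hcond c1.1 P2
      have hp : ∀ p, (xx n)^2 ∣ c1.1.1.ψ p (xx n) - c2.1.1.ψ p (xx n) := by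
        intro p
        have ha := hcond c1.1 p
        have hb' := hcond c2.1 p
        have hid : c1.1.1.ψ p (xx n) - c2.1.1.ψ p (xx n)
            = (c1.1.1.ψ p (xx n) - (b p : TP n) * xx n)
              - (c2.1.1.ψ p (xx n) - (b p : TP n) * xx n) := by ring
        rw [hid]
        exact dvd_sub ha hb'
      have hall := S19.rigidity hn2 c1.1.1 c2.1.1 hβ hψ2 hβx hp
      exact Subtype.ext (Subtype.ext (S19.adamsFamily_ext hall))
    exact Finite.of_injective _ hinj
  have hsurj : Function.Surjective
      (fun c : C => (Quot.mk (fun (R S : Sub) => AdamsIso R.1 S.1) c.1)) := by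
    intro y
    induction y using Quot.ind with
    | _ R =>
      obtain ⟨S, hiso, hcondS, hcoS⟩ :=
        S19.normalize hn2 hβ b hβdef R.1 (hcond R) n
      set SS : Sub := ⟨S, fun p => Ideal.mem_span_singleton.2 (hcondS p)⟩ with hSS
      refine ⟨⟨SS, ?_⟩, ?_⟩
      · intro j h2j
        rcases Nat.lt_or_ge j n with hj | hj
        · exact hcoS j h2j hj
        · have hz : S19.coef j (S.ψ P2 (xx n)) = 0 := S19.coef_high hj _
          have hne : β - β^j ≠ 0 :=
            sub_ne_zero.2 (Ne.symm (S19.beta_pow_ne hβ h2j))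
          rw [hz]
          exact ⟨le_refl 0, abs_pos.2 hne⟩
      · have hrel : (fun (R S : Sub) => AdamsIso R.1 S.1) R SS := hiso
        show Quot.mk (fun (R S : Sub) => AdamsIso R.1 S.1) SS
            = Quot.mk (fun (R S : Sub) => AdamsIso R.1 S.1) R
        exact (Quot.sound (r := fun (R S : Sub) => AdamsIso R.1 S.1) hrel).symm
  exact Finite.of_surjective _ hsurj
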